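/- A formal power series f ∈ 1 + z·ℚ_p[[z]] has all coefficients in ℤ_p if and only if f(z^p)/f(z)^p ∈ 1 + p·z·ℤ_p[[z]]. -/

import Mathlib

open PowerSeries

lemma poly_pow_char (p : ℕ) [Fact p.Prime] (A : Polynomial (ZMod p)) :
    A ^ p = Polynomial.expand (ZMod p) p A := by
  exact (ZMod.expand_card A).symm

lemma ps_coeff_pow_char (p : ℕ) [Fact p.Prime] (Φ : PowerSeries (ZMod p)) (n : ℕ) :
    coeff n (Φ ^ p) = if p ∣ n then coeff (n / p) Φ else 0 := by
  have hp : 0 < p := (Fact.out : p.Prime).pos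
  have h1 : coeff n (Φ ^ p) =
      coeff n ((trunc (n+1) Φ : PowerSeries (ZMod p)) ^ p) := by
    have := trunc_trunc_pow Φ (n+1) p
    have h2 := congrArg (fun q : Polynomial (ZMod p) => q.coeff n) this
    simp only [PowerSeries.coeff_trunc, Nat.lt_succ_self, if_true] at h2
    exact h2.symm
  rw [h1, ← Polynomial.coe_pow, Polynomial.coeff_coe, poly_pow_char,
    Polynomial.coeff_expand hp]
  split
  · next h =>
    rw [PowerSeries.coeff_trunc, if_pos (Nat.lt_succ_of_le (Nat.div_le_self n p))]
  · rfl

lemma norm_le_p_of_toZMod_eq_zero (p : ℕ) [Fact p.Prime] (x : ℤ_[p])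
    (h : PadicInt.toZMod x = 0) : ‖x‖ ≤ ‖(p : ℤ_[p])‖ := by
  have hx : x ∈ Ideal.span ({(p : ℤ_[p]) ^ 1} : Set ℤ_[p]) := by
    rw [pow_one, ← PadicInt.maximalIdeal_eq_span_p, ← PadicInt.ker_toZMod]
    exact h
  have h2 := (PadicInt.norm_le_pow_iff_mem_span_pow x 1).mpr hx
  rw [PadicInt.norm_p]
  simpa [zpow_neg, zpow_one] using h2

/-- Dwork's (Dieudonné's) lemma: a formal power series `f ∈ 1 + z·ℚ_p[[z]]` has all
coefficients in `ℤ_p` iff `f(z^p)/f(z)^p ∈ 1 + p·z·ℤ_p[[z]]`. Here `fp` denotes the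
series `f(z^p)`. -/
theorem dwork_lemma (p : ℕ) [Fact p.Prime] (f : PowerSeries ℚ_[p])
    (hf1 : PowerSeries.constantCoeff f = 1)
    (fp : PowerSeries ℚ_[p])
    (hfp : ∀ n : ℕ, PowerSeries.coeff n fp =
      if p ∣ n then PowerSeries.coeff (n / p) f else 0) :
    (∀ n : ℕ, ‖PowerSeries.coeff n f‖ ≤ 1) ↔
      (PowerSeries.constantCoeff (fp * (f ^ p)⁻¹) = 1 ∧
        ∀ n : ℕ, 1 ≤ n →
          ‖PowerSeries.coeff n (fp * (f ^ p)⁻¹)‖ ≤ ‖(p : ℚ_[p])‖) := by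
  have hp : p.Prime := Fact.out
  set ι : ℤ_[p] →+* ℚ_[p] := PadicInt.Coe.ringHom with hι
  have hιnorm : ∀ x : ℤ_[p], ‖ι x‖ = ‖x‖ := fun x => rfl
  have hnormp : ‖(p : ℚ_[p])‖ = ‖(p : ℤ_[p])‖ := by
    rw [PadicInt.norm_p, Padic.norm_p]
  have hcpow : constantCoeff (f ^ p) ≠ 0 := by
    rw [map_pow, hf1, one_pow]; exact one_ne_zero
  constructor
  · intro hint
    set F : PowerSeries ℤ_[p] :=
      PowerSeries.mk (fun n => (id ⟨coeff n f, hint n⟩ : ℤ_[p])) with hFdef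
    have hmapF : PowerSeries.map ι F = f := by
      ext n; rw [coeff_map, hFdef, coeff_mk]; rfl
    have hF0 : constantCoeff F = 1 := by
      rw [← coeff_zero_eq_constantCoeff_apply, hFdef, coeff_mk]
      exact Subtype.ext (by
        show coeff 0 f = 1
        rw [coeff_zero_eq_constantCoeff_apply, hf1])
    set Fp' : PowerSeries ℤ_[p] :=
      PowerSeries.mk (fun n => if p ∣ n then coeff (n / p) F else 0) with hFpdef
    have hmapFp : PowerSeries.map ι Fp' = fp := by
      ext n
      rw [coeff_map, hFpdef, coeff_mk, hfp n]
      split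
      · rw [← hmapF, coeff_map]
      · exact map_zero ι
    set H : PowerSeries ℤ_[p] := PowerSeries.invOfUnit (F ^ p) 1 with hHdef
    have hFpH : F ^ p * H = 1 :=
      PowerSeries.mul_invOfUnit _ _ (by rw [map_pow, hF0, one_pow]; rfl)
    have hmapH : PowerSeries.map ι H = (f ^ p)⁻¹ := by
      rw [PowerSeries.eq_inv_iff_mul_eq_one hcpow, ← hmapF, ← map_pow, ← map_mul,
        mul_comm, hFpH, map_one]
    have hkey : fp * (f ^ p)⁻¹ = PowerSeries.map ι (Fp' * H) := by
      rw [map_mul, hmapFp, hmapH]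
    have hzm : PowerSeries.map (PadicInt.toZMod (p := p)) Fp' =
        (PowerSeries.map PadicInt.toZMod F) ^ p := by
      ext m
      rw [coeff_map, hFpdef, coeff_mk, ps_coeff_pow_char]
      split
      · rw [coeff_map]
      · exact map_zero _
    have hG1 : PowerSeries.map (PadicInt.toZMod (p := p)) (Fp' * H) = 1 := by
      calc PowerSeries.map PadicInt.toZMod (Fp' * H)
          = (PowerSeries.map PadicInt.toZMod F) ^ p *
            PowerSeries.map PadicInt.toZMod H := by rw [map_mul, hzm]
        _ = PowerSeries.map PadicInt.toZMod (F ^ p * H) := by rw [map_mul, map_pow]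
        _ = 1 := by rw [hFpH, map_one]
    constructor
    · rw [hkey, ← coeff_zero_eq_constantCoeff_apply, coeff_map]
      have hc0 : coeff 0 (Fp' * H) = 1 := by
        rw [coeff_zero_eq_constantCoeff_apply, map_mul,
          PowerSeries.constantCoeff_invOfUnit]
        rw [← coeff_zero_eq_constantCoeff_apply, hFpdef, coeff_mk,
          if_pos (dvd_zero p), Nat.zero_div, coeff_zero_eq_constantCoeff_apply, hF0]
        simp
      rw [hc0, map_one]
    · intro n hn
      rw [hkey, coeff_map, hιnorm, hnormp]
      apply norm_le_p_of_toZMod_eq_zero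
      have h2 := congrArg (coeff n) hG1
      rw [coeff_map] at h2
      rw [h2, coeff_one, if_neg (by omega)]
  · rintro ⟨h0, hb⟩
    have hfpg : fp = (fp * (f ^ p)⁻¹) * f ^ p := by
      rw [mul_assoc, PowerSeries.inv_mul_cancel _ hcpow, mul_one]
    intro n
    induction n using Nat.strong_induction_on with
    | _ n ih =>
    rcases Nat.eq_zero_or_pos n with rfl | hn
    · rw [coeff_zero_eq_constantCoeff_apply, hf1, norm_one]
    set a : ℕ → ℤ_[p] := fun k => if h : k < n then id ⟨coeff k f, ih k h⟩ else 0
      with hadef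
    set F : PowerSeries ℤ_[p] := PowerSeries.mk a with hFdef
    set T : PowerSeries ℚ_[p] := PowerSeries.map ι F with hTdef
    have hTcoeff : ∀ k, coeff k T = if k < n then coeff k f else 0 := by
      intro k
      rw [hTdef, coeff_map, hFdef, coeff_mk]
      simp only [hadef]
      by_cases h : k < n
      · rw [dif_pos h, if_pos h]; rfl
      · rw [dif_neg h, if_neg h]; exact map_zero ι
    have htr : trunc n T = trunc n f := by
      ext m
      by_cases h : m < n
      · rw [PowerSeries.coeff_trunc, PowerSeries.coeff_trunc, if_pos h, if_pos h,
          hTcoeff, if_pos h]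
      · rw [PowerSeries.coeff_trunc, PowerSeries.coeff_trunc, if_neg h, if_neg h]
    have hcoeffpow : ∀ j, j < n → coeff j (f ^ p) = coeff j (T ^ p) := by
      intro j hj
      have e1 : trunc n (f ^ p) = trunc n (T ^ p) := by
        rw [← trunc_trunc_pow f n p, ← trunc_trunc_pow T n p, htr]
      have h2 := congrArg (fun q : Polynomial ℚ_[p] => q.coeff j) e1
      simpa [PowerSeries.coeff_trunc, hj] using h2
    have hTpow : ∀ j, coeff j (T ^ p) = ι (coeff j (F ^ p)) := by
      intro j; rw [hTdef, ← map_pow, coeff_map]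
    have hbound : ∀ j, j < n → ‖coeff j (f ^ p)‖ ≤ 1 := by
      intro j hj
      rw [hcoeffpow j hj, hTpow, hιnorm]
      exact PadicInt.norm_le_one _
    have hTS : T = ((trunc n f : Polynomial ℚ_[p]) : PowerSeries ℚ_[p]) := by
      ext k
      rw [hTcoeff, Polynomial.coeff_coe, PowerSeries.coeff_trunc]
    have hT0 : constantCoeff T = 1 := by
      rw [← coeff_zero_eq_constantCoeff_apply, hTcoeff, if_pos hn,
        coeff_zero_eq_constantCoeff_apply, hf1]
    have hp2 : 2 ≤ p := hp.two_le
    set c : ℚ_[p] := coeff n f with hcdef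
    -- binomial computation
    have e3 : ((trunc (n+1) f : Polynomial ℚ_[p]) : PowerSeries ℚ_[p])
        = T + PowerSeries.C c * X ^ n := by
      rw [trunc_succ, Polynomial.coe_add, Polynomial.coe_monomial, hTS]
      congr 1
      ext k
      rw [coeff_monomial, coeff_C_mul_X_pow]
    have e2 : coeff n (f ^ p) =
        coeff n (((trunc (n+1) f : Polynomial ℚ_[p]) : PowerSeries ℚ_[p]) ^ p) := by
      have e1 := trunc_trunc_pow f (n+1) p
      have h2 := congrArg (fun q : Polynomial ℚ_[p] => q.coeff n) e1
      simp only [PowerSeries.coeff_trunc, Nat.lt_succ_self, if_true] at h2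
      exact h2.symm
    have hre : ∀ (k m : ℕ) (d : PowerSeries ℚ_[p]),
        T ^ k * (PowerSeries.C c * X ^ n) ^ m * d
          = (T ^ k * PowerSeries.C (c ^ m) * d) * X ^ (n * m) := by
      intro k m d
      rw [mul_pow, ← map_pow PowerSeries.C c m, ← pow_mul]
      ring
    have hterm : ∀ k ∈ Finset.range (p + 1),
        coeff n (T ^ k * (PowerSeries.C c * X ^ n) ^ (p - k) *
          ((p.choose k : ℕ) : PowerSeries ℚ_[p]))
        = (if k = p then coeff n (T ^ p) else 0)
          + (if k = p - 1 then (p : ℚ_[p]) * c else 0) := by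
      intro k hk
      rw [Finset.mem_range] at hk
      rw [hre]
      by_cases hkp : k = p
      · subst hkp
        rw [if_pos rfl, if_neg (by omega), add_zero]
        simp [Nat.choose_self]
      · by_cases hkp1 : k = p - 1
        · subst hkp1
          have ha1 : p - (p - 1) = 1 := by omega
          have ha2 : p.choose (p - 1) = p := by
            have hs := Nat.choose_symm (n := p) (k := 1) (by omega)
            simp only [Nat.choose_one_right] at hs
            simpa using hs
          rw [if_neg hkp, if_pos rfl, zero_add, ha1, ha2, pow_one, Nat.mul_one,
            coeff_mul_X_pow', if_pos (le_refl n), Nat.sub_self,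
            coeff_zero_eq_constantCoeff_apply, map_mul, map_mul, map_pow, hT0, one_pow,
            one_mul, constantCoeff_C, map_natCast, mul_comm]
        · rw [if_neg hkp, if_neg hkp1, add_zero, coeff_mul_X_pow', if_neg]
          push_neg
          have ha3 : 2 ≤ p - k := by omega
          calc n < n * 2 := by omega
            _ ≤ n * (p - k) := Nat.mul_le_mul_left n ha3
    have h2 : coeff n (f ^ p) = coeff n (T ^ p) + (p : ℚ_[p]) * c := by
      rw [e2, e3, add_pow, map_sum, Finset.sum_congr rfl hterm, Finset.sum_add_distrib,
        Finset.sum_ite_eq' (Finset.range (p + 1)) p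
          (fun _ => coeff n (T ^ p)),
        Finset.sum_ite_eq' (Finset.range (p + 1)) (p - 1)
          (fun _ => (p : ℚ_[p]) * c),
        if_pos (Finset.mem_range.mpr (by omega)),
        if_pos (Finset.mem_range.mpr (by omega))]
    set g := fp * (f ^ p)⁻¹ with hgdef
    have h3 : coeff n fp = coeff n (f ^ p)
        + coeff n ((g - 1) * f ^ p) := by
      conv_lhs => rw [hfpg]
      have hr : g * f ^ p = f ^ p + (g - 1) * f ^ p := by ring
      rw [hr, map_add]
    have hR : ‖coeff n ((g - 1) * f ^ p)‖ ≤ ‖(p : ℚ_[p])‖ := by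
      rw [PowerSeries.coeff_mul]
      apply IsUltrametricDist.norm_sum_le_of_forall_le_of_nonneg (norm_nonneg _)
      rintro ⟨i, j⟩ hij
      rw [Finset.HasAntidiagonal.mem_antidiagonal] at hij
      rcases Nat.eq_zero_or_pos i with rfl | hi
      · have hz : coeff 0 (g - 1) = 0 := by
          simp [coeff_zero_eq_constantCoeff_apply, h0]
        simp only [hz, zero_mul, norm_zero]
        exact norm_nonneg _
      · have hj : j < n := by omega
        have hg1 : ‖coeff i (g - 1)‖ ≤ ‖(p : ℚ_[p])‖ := by
          rw [map_sub, PowerSeries.coeff_one, if_neg (by omega), sub_zero]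
          exact hb i hi
        calc ‖coeff i (g - 1) * coeff j (f ^ p)‖
            = ‖coeff i (g - 1)‖ * ‖coeff j (f ^ p)‖ := norm_mul _ _
          _ ≤ ‖(p : ℚ_[p])‖ * 1 :=
              mul_le_mul hg1 (hbound j hj) (norm_nonneg _) (norm_nonneg _)
          _ = ‖(p : ℚ_[p])‖ := mul_one _
    set e' : ℤ_[p] := if p ∣ n then a (n / p) else 0 with hedef
    have h4 : coeff n fp = ι e' := by
      rw [hfp n, hedef]
      by_cases h : p ∣ n
      · rw [if_pos h, if_pos h]
        simp only [hadef]
        rw [dif_pos (Nat.div_lt_self hn hp.one_lt)]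
        rfl
      · rw [if_neg h, if_neg h, map_zero]
    have h5 : ‖ι e' - coeff n (T ^ p)‖ ≤ ‖(p : ℚ_[p])‖ := by
      rw [hTpow, ← map_sub, hιnorm, hnormp]
      apply norm_le_p_of_toZMod_eq_zero
      rw [map_sub]
      have hz : PadicInt.toZMod (coeff n (F ^ p)) =
          coeff n ((PowerSeries.map (PadicInt.toZMod (p := p)) F) ^ p) := by
        rw [← map_pow, coeff_map]
      rw [hz, ps_coeff_pow_char, hedef]
      by_cases h : p ∣ n
      · rw [if_pos h, if_pos h, coeff_map, hFdef, coeff_mk, sub_self]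
      · rw [if_neg h, if_neg h, map_zero, sub_self]
    have hpc : (p : ℚ_[p]) * c = (ι e' - coeff n (T ^ p))
        - coeff n ((g - 1) * f ^ p) := by
      have h6 := h3
      rw [h4, h2] at h6
      linear_combination -h6
    have h7 : ‖(p : ℚ_[p]) * c‖ ≤ ‖(p : ℚ_[p])‖ := by
      rw [hpc, sub_eq_add_neg]
      refine le_trans (IsUltrametricDist.norm_add_le_max _ _) (max_le h5 ?_)
      rw [norm_neg]; exact hR
    have hpne : (p : ℚ_[p]) ≠ 0 := Nat.cast_ne_zero.mpr hp.pos.ne'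
    have hppos : 0 < ‖(p : ℚ_[p])‖ := norm_pos_iff.mpr hpne
    rw [norm_mul] at h7
    have h8 : ‖(p : ℚ_[p])‖ * ‖c‖ ≤ ‖(p : ℚ_[p])‖ * 1 := by rwa [mul_one]
    exact le_of_mul_le_mul_left h8 hppos
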